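/- arXiv:1403.2695 — 5 statements merged into one kernel-verified Lean document; each statement's English description precedes it below -/
import Mathlib

section
/- Let f₀ and f be probability densities with respect to a measure μ, with ‖f₀/f‖_∞ < ∞. Then the Kullback–Leibler divergence satisfies K(f₀,f) ≤ 2 h²(f₀,f) ‖f₀/f‖_∞, where h²(f₀,f) = ∫ (f₀^{1/2} − f^{1/2})² dμ is the squared Hellinger distance. -/
open MeasureTheory Real

private lemma phi_hasDerivAt (C t : ℝ) (ht : 0 < t) :
    HasDerivAt (fun s : ℝ => 2*C*(s-1)^2 - 2*s^2*Real.log s + s^2 - 1)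
      (4*C*(t-1) - 4*t*Real.log t) t := by
  have h1 : HasDerivAt (fun s : ℝ => s^2) (2*t) t := by
    simpa using hasDerivAt_pow 2 t
  have h2 : HasDerivAt (fun s : ℝ => s^2 * Real.log s)
      (2*t*Real.log t + t^2 * t⁻¹) t := h1.mul (Real.hasDerivAt_log ht.ne')
  have h3 : HasDerivAt (fun s : ℝ => (s-1)^2) (2*(t-1)) t := by
    have := ((hasDerivAt_id t).sub_const 1).pow 2
    simpa [Pi.pow_def] using this
  have := (((h3.const_mul (2*C)).sub (h2.const_mul 2)).add h1).sub_const 1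
  have h4 : HasDerivAt (fun s : ℝ => 2*C*(s-1)^2 - 2*(s^2*Real.log s) + s^2 - 1) _ t := this
  convert h4 using 1
  · ext s; ring
  · field_simp; ring

private lemma scalar_key {C s : ℝ} (hC : 1 ≤ C) (hs : 0 ≤ s) (hsC : s^2 ≤ C) :
    2*s^2*Real.log s - s^2 + 1 ≤ 2*C*(s-1)^2 := by
  rcases eq_or_lt_of_le hs with h0 | h0
  · rw [← h0]; simp; nlinarith
  set φ : ℝ → ℝ := fun s : ℝ => 2*C*(s-1)^2 - 2*s^2*Real.log s + s^2 - 1 with hφ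
  have hφ1 : φ 1 = 0 := by simp [hφ]
  have key : 0 ≤ φ s := by
    rcases le_total s 1 with hle | hle
    · -- antitone on [s, 1]
      have hanti : AntitoneOn φ (Set.Icc s 1) := by
        apply antitoneOn_of_deriv_nonpos (convex_Icc s 1)
        · intro t ht
          exact (phi_hasDerivAt C t (lt_of_lt_of_le h0 ht.1)).continuousAt.continuousWithinAt
        · rw [interior_Icc]
          intro t ht
          exact (phi_hasDerivAt C t (h0.trans ht.1)).differentiableAt.differentiableWithinAt
        · rw [interior_Icc]
          intro t ht
          have htpos : 0 < t := h0.trans ht.1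
          rw [(phi_hasDerivAt C t htpos).deriv]
          have hlog : 1 - t⁻¹ ≤ Real.log t := Real.one_sub_inv_le_log_of_pos htpos
          have : t - 1 ≤ t * Real.log t := by
            have := mul_le_mul_of_nonneg_left hlog htpos.le
            calc t - 1 = t * (1 - t⁻¹) := by field_simp
            _ ≤ t * Real.log t := this
          nlinarith [ht.2.le]
      have := hanti (Set.left_mem_Icc.2 hle) (Set.right_mem_Icc.2 hle) hle
      rw [hφ1] at this; linarith
    · -- monotone on [1, s]
      have hmono : MonotoneOn φ (Set.Icc 1 s) := by
        apply monotoneOn_of_deriv_nonneg (convex_Icc 1 s)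
        · intro t ht
          exact (phi_hasDerivAt C t (lt_of_lt_of_le one_pos ht.1)).continuousAt.continuousWithinAt
        · rw [interior_Icc]
          intro t ht
          exact (phi_hasDerivAt C t (one_pos.trans ht.1)).differentiableAt.differentiableWithinAt
        · rw [interior_Icc]
          intro t ht
          have ht1 : (1:ℝ) < t := ht.1
          have htpos : 0 < t := one_pos.trans ht1
          rw [(phi_hasDerivAt C t htpos).deriv]
          have hlog : Real.log t ≤ t - 1 := Real.log_le_sub_one_of_pos htpos
          have htC : t ≤ C := by nlinarith [ht.2.le]
          have : t * Real.log t ≤ t * (t - 1) := by nlinarith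
          nlinarith
      have := hmono (Set.left_mem_Icc.2 hle) (Set.right_mem_Icc.2 hle) hle
      rw [hφ1] at this; linarith
  simp only [hφ] at key; linarith

private lemma pointwise_key {C x y : ℝ} (hC : 1 ≤ C) (hx : 0 ≤ x) (hy : 0 ≤ y)
    (hr : x ≤ C * y) :
    x * Real.log (x / y) - x + y ≤ 2*C*(Real.sqrt x - Real.sqrt y)^2 := by
  rcases eq_or_lt_of_le hy with h0 | h0
  · have hx0 : x = 0 := le_antisymm (by rw [← h0] at hr; simpa using hr) hx
    simp [hx0, ← h0]
  set s := Real.sqrt (x / y) with hsdef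
  have hs : 0 ≤ s := Real.sqrt_nonneg _
  have hs2 : s^2 = x / y := Real.sq_sqrt (div_nonneg hx h0.le)
  have hsC : s^2 ≤ C := by
    rw [hs2, div_le_iff₀ h0]; linarith [hr]
  have key := scalar_key hC hs hsC
  have hlog2 : 2 * Real.log s = Real.log (x / y) := by
    rw [hsdef, Real.log_sqrt (div_nonneg hx h0.le)]; ring
  have hys2 : y * s^2 = x := by rw [hs2]; field_simp
  have hmul : Real.sqrt y * s = Real.sqrt x := by
    rw [mul_comm, hsdef, ← Real.sqrt_mul (div_nonneg hx h0.le) y,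
      div_mul_cancel₀ _ h0.ne']
  have hsq : Real.sqrt y ^ 2 = y := Real.sq_sqrt h0.le
  have e1 : y * (2*s^2*Real.log s - s^2 + 1) = x * Real.log (x / y) - x + y := by
    have h : y * (2*s^2*Real.log s - s^2 + 1)
        = (y * s^2) * (2*Real.log s) - (y * s^2) + y := by ring
    rw [h, hys2, hlog2]
  have e2 : y * (2*C*(s-1)^2) = 2*C*(Real.sqrt x - Real.sqrt y)^2 := by
    linear_combination (-(2*C*(s-1)^2)) * hsq
      + (2*C*(Real.sqrt y * s + Real.sqrt x - 2*Real.sqrt y)) * hmul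
  have := mul_le_mul_of_nonneg_left key h0.le
  linarith [e1 ▸ e2 ▸ this]

/-- Let `f₀` and `f` be probability densities with respect to `μ` with density ratio
`f₀/f` bounded by `C`.  Then the Kullback–Leibler divergence satisfies
`K(f₀, f) ≤ 2 h²(f₀, f) ‖f₀/f‖_∞`, where `h²` is the squared Hellinger distance. -/
theorem KL_le_two_hellinger_sq_mul_ratio {α : Type*} [MeasurableSpace α] (μ : Measure α)
    (f₀ f : α → ℝ) (C : ℝ)
    (hf₀m : Measurable f₀) (hfm : Measurable f)
    (hf₀0 : ∀ a, 0 ≤ f₀ a) (hf0 : ∀ a, 0 ≤ f a)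
    (hd₀ : ∫ a, f₀ a ∂μ = 1) (hd : ∫ a, f a ∂μ = 1)
    (hratio : ∀ a, f₀ a ≤ C * f a)
    (hK : Integrable (fun a => f₀ a * Real.log (f₀ a / f a)) μ)
    (hH : Integrable (fun a => (Real.sqrt (f₀ a) - Real.sqrt (f a)) ^ 2) μ) :
    ∫ a, f₀ a * Real.log (f₀ a / f a) ∂μ
      ≤ 2 * (∫ a, (Real.sqrt (f₀ a) - Real.sqrt (f a)) ^ 2 ∂μ) * C := by
  have hint₀ : Integrable f₀ μ := by
    by_contra h
    rw [integral_undef h] at hd₀; norm_num at hd₀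
  have hintf : Integrable f μ := by
    by_contra h
    rw [integral_undef h] at hd; norm_num at hd
  have hC : 1 ≤ C := by
    have h1 : ∫ a, f₀ a ∂μ ≤ ∫ a, C * f a ∂μ :=
      integral_mono hint₀ (hintf.const_mul C) hratio
    rw [hd₀, integral_const_mul, hd, mul_one] at h1
    exact h1
  have hptwise : ∀ a, f₀ a * Real.log (f₀ a / f a) - f₀ a + f a
      ≤ 2*C*(Real.sqrt (f₀ a) - Real.sqrt (f a))^2 :=
    fun a => pointwise_key hC (hf₀0 a) (hf0 a) (hratio a)
  have hintL : Integrable (fun a => f₀ a * Real.log (f₀ a / f a) - f₀ a + f a) μ :=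
    (hK.sub hint₀).add hintf
  have hintR : Integrable (fun a => 2*C*(Real.sqrt (f₀ a) - Real.sqrt (f a))^2) μ :=
    hH.const_mul _
  have hsubint : Integrable (fun a => f₀ a * Real.log (f₀ a / f a) - f₀ a) μ :=
    hK.sub hint₀
  have hmono := integral_mono hintL hintR hptwise
  rw [integral_add hsubint hintf, integral_sub hK hint₀, hd₀, hd,
    integral_const_mul] at hmono
  nlinarith [hmono]
end

section
/- Let f₀ and f be probability densities with respect to a measure μ, with ‖f₀/f‖_∞ < ∞. Then the Kullback–Leibler variation V(f₀,f) = ∫ f₀ log²(f₀/f) dμ satisfies V(f₀,f) ≤ C h²(f₀,f) (1 + ‖f₀/f‖_∞)² for a universal constant C > 0, where h is the Hellinger distance. -/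
open MeasureTheory Real

lemma core_log_ineq (s : ℝ) (hs : 0 < s) :
    s ^ 2 * (Real.log s) ^ 2 ≤ (1 + s) ^ 2 * (s - 1) ^ 2 := by
  have h : s * |Real.log s| ≤ (1 + s) * |s - 1| := by
    rcases le_or_gt 1 s with h1 | h1
    · rw [abs_of_nonneg (Real.log_nonneg h1), abs_of_nonneg (by linarith)]
      have h2 := Real.log_le_sub_one_of_pos hs
      nlinarith
    · rw [abs_of_nonpos (Real.log_nonpos hs.le h1.le), abs_of_neg (by linarith)]
      have h2 : Real.log s⁻¹ ≤ s⁻¹ - 1 := Real.log_le_sub_one_of_pos (by positivity)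
      rw [Real.log_inv] at h2
      have h3 := mul_le_mul_of_nonneg_left h2 hs.le
      have h4 : s * s⁻¹ = 1 := mul_inv_cancel₀ hs.ne'
      nlinarith
  have h2 := mul_self_le_mul_self (by positivity) h
  calc s ^ 2 * (Real.log s) ^ 2 = (s * |Real.log s|) * (s * |Real.log s|) := by
        rw [mul_mul_mul_comm, ← sq, ← sq, sq_abs]
    _ ≤ ((1 + s) * |s - 1|) * ((1 + s) * |s - 1|) := h2
    _ = (1 + s) ^ 2 * (s - 1) ^ 2 := by
        rw [mul_mul_mul_comm, ← sq, ← sq, sq_abs]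

lemma core2 (u v : ℝ) (hu : 0 < u) (hv : 0 < v) :
    u ^ 2 * (Real.log (u / v)) ^ 2 ≤ (1 + u / v) ^ 2 * (u - v) ^ 2 := by
  have hcore := core_log_ineq (u / v) (by positivity)
  have h1 : (u / v) ^ 2 * (Real.log (u / v)) ^ 2 * v ^ 2
      ≤ (1 + u / v) ^ 2 * ((u / v) - 1) ^ 2 * v ^ 2 :=
    mul_le_mul_of_nonneg_right hcore (sq_nonneg v)
  have e1 : (u / v) ^ 2 * (Real.log (u / v)) ^ 2 * v ^ 2
      = u ^ 2 * (Real.log (u / v)) ^ 2 := by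
    field_simp
  have e2 : (1 + u / v) ^ 2 * ((u / v) - 1) ^ 2 * v ^ 2
      = (1 + u / v) ^ 2 * (u - v) ^ 2 := by
    have h : ((u / v) - 1) ^ 2 * v ^ 2 = (u - v) ^ 2 := by
      field_simp
    rw [mul_assoc, h]
  rw [← e1, ← e2]
  exact h1

lemma key_ineq (M x y : ℝ) (hM : 0 ≤ M) (hx : 0 ≤ x) (hy : 0 ≤ y) (hxy : x ≤ M * y) :
    x * (Real.log (x / y)) ^ 2 ≤ 16 * (1 + M) ^ 2 * (Real.sqrt x - Real.sqrt y) ^ 2 := by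
  rcases eq_or_lt_of_le hy with hy0 | hy0
  · have hx0 : x = 0 := le_antisymm (by nlinarith) hx
    rw [hx0, zero_mul]
    positivity
  rcases eq_or_lt_of_le hx with hx0 | hx0
  · rw [← hx0, zero_mul]
    positivity
  set u := Real.sqrt x with hudef
  set v := Real.sqrt y with hvdef
  have hu : 0 < u := Real.sqrt_pos.2 hx0
  have hv : 0 < v := Real.sqrt_pos.2 hy0
  have hux : u ^ 2 = x := Real.sq_sqrt hx
  have hvy : v ^ 2 = y := Real.sq_sqrt hy
  have hlog : Real.log (x / y) = 2 * Real.log (u / v) := by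
    rw [Real.log_div hx0.ne' hy0.ne', Real.log_div hu.ne' hv.ne', ← hux, ← hvy,
      Real.log_pow, Real.log_pow]
    push_cast; ring
  have hsM : u ≤ Real.sqrt M * v := by
    calc u = Real.sqrt x := rfl
      _ ≤ Real.sqrt (M * y) := Real.sqrt_le_sqrt hxy
      _ = Real.sqrt M * v := by rw [Real.sqrt_mul hM]
  have hMle : Real.sqrt M ≤ 1 + M := by
    nlinarith [Real.sq_sqrt hM, Real.sqrt_nonneg M]
  have hb : 1 + u / v ≤ 2 * (1 + M) := by
    have hdv : u / v ≤ Real.sqrt M := by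
      rw [div_le_iff₀ hv]; exact hsM
    linarith
  have hb2 : (1 + u / v) ^ 2 ≤ (2 * (1 + M)) ^ 2 :=
    pow_le_pow_left₀ (by positivity) hb 2
  have hc := core2 u v hu hv
  have hc2 := mul_le_mul_of_nonneg_right hb2 (sq_nonneg (u - v))
  rw [hlog, ← hux]
  nlinarith [sq_nonneg (Real.log (u / v))]

/-- There is a universal constant `C > 0` such that for all probability densities `f₀, f`
with respect to a measure `μ` with density ratio `f₀/f` bounded by `M`, the
Kullback–Leibler variation satisfies `V(f₀,f) ≤ C h²(f₀,f) (1 + M)²`, where `h` is the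
Hellinger distance. -/
theorem KL_variation_le_hellinger_sq :
    ∃ C : ℝ, 0 < C ∧
      ∀ (α : Type) (_ : MeasurableSpace α) (μ : Measure α) (f₀ f : α → ℝ) (M : ℝ),
        Measurable f₀ → Measurable f →
        (∀ a, 0 ≤ f₀ a) → (∀ a, 0 ≤ f a) →
        (∫ a, f₀ a ∂μ) = 1 → (∫ a, f a ∂μ) = 1 →
        (∀ a, f₀ a ≤ M * f a) →
        Integrable (fun a => f₀ a * (Real.log (f₀ a / f a)) ^ 2) μ →
        Integrable (fun a => (Real.sqrt (f₀ a) - Real.sqrt (f a)) ^ 2) μ →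
        ∫ a, f₀ a * (Real.log (f₀ a / f a)) ^ 2 ∂μ
          ≤ C * (∫ a, (Real.sqrt (f₀ a) - Real.sqrt (f a)) ^ 2 ∂μ) * (1 + M) ^ 2 := by
  refine ⟨16, by norm_num, ?_⟩
  intro α _ μ f₀ f M hmf₀ hmf hf₀ hf hint₀ hintf hle hI1 hI2
  have hM : 0 ≤ M := by
    by_contra h
    push_neg at h
    have hz : ∀ a, f a = 0 := by
      intro a
      have h1 := hf₀ a
      have h2 := hle a
      have h3 := hf a
      nlinarith
    simp [hz] at hintf
  have hpt : ∀ a, f₀ a * (Real.log (f₀ a / f a)) ^ 2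
      ≤ 16 * (1 + M) ^ 2 * ((Real.sqrt (f₀ a) - Real.sqrt (f a)) ^ 2) :=
    fun a => key_ineq M _ _ hM (hf₀ a) (hf a) (hle a)
  have hInt : Integrable (fun a => 16 * (1 + M) ^ 2
      * ((Real.sqrt (f₀ a) - Real.sqrt (f a)) ^ 2)) μ := hI2.const_mul _
  have hmono := integral_mono hI1 hInt hpt
  rw [integral_const_mul] at hmono
  have heq : (16 : ℝ) * (∫ a, (Real.sqrt (f₀ a) - Real.sqrt (f a)) ^ 2 ∂μ) * (1 + M) ^ 2
      = 16 * (1 + M) ^ 2 * ∫ a, (Real.sqrt (f₀ a) - Real.sqrt (f a)) ^ 2 ∂μ := by ring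
  rw [heq]
  exact hmono
end

section
/- Let ξ = (ξ_{j₀,j₁,…,j_d}) be nonnegative coefficients satisfying |1 − Σ_{j₀=1}^{J₀} ξ_{j₀,j₁,…,j_d}| ≤ δ < 1/2 for every (j₁,…,j_d), and suppose the function g(y,x) = Σ ξ_{j₀,…,j_d} B̄_{j₀}(y) Π_k B_{j_k}(x_k) satisfies ‖g‖_∞ ≤ M. Define η_{j₀,…,j_d} = ξ_{j₀,…,j_d}/Σ_{m} ξ_{m,j₁,…,j_d}. Then each (η_{j₀,…,j_d} : j₀) lies in the simplex Δ_{J₀}, and ‖g − Σ η_{j₀,…,j_d} B̄_{j₀}(y) Π_k B_{j_k}(x_k)‖_∞ ≤ 2δM. -/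
/-- Renormalization of approximate conditional-density coefficients.  If the nonnegative
coefficients `ξ` have normalization defect at most `δ < 1/2` in each column, and the
induced function `g` is bounded by `M`, then the renormalized coefficients
`η = ξ / (column sum)` lie in the simplex and the induced function changes by at most
`2δM` in supremum norm. -/
theorem renormalized_coefficients {X : Type*} {κ : Type*} [Fintype κ] (J₀ : ℕ)
    (ξ : Fin J₀ → κ → ℝ) (δ M : ℝ) (hδ0 : 0 ≤ δ) (hδ : δ < 1 / 2)
    (hξ : ∀ j₀ k, 0 ≤ ξ j₀ k)
    (Bbar : Fin J₀ → ℝ → ℝ) (hBbar : ∀ j₀ y, 0 ≤ Bbar j₀ y)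
    (B : κ → X → ℝ) (hB : ∀ k x, 0 ≤ B k x) (hBsum : ∀ x, ∑ k, B k x = 1)
    (hdefect : ∀ k, |1 - ∑ j₀, ξ j₀ k| ≤ δ)
    (hbound : ∀ (y : ℝ) (x : X), |∑ j₀, ∑ k, ξ j₀ k * Bbar j₀ y * B k x| ≤ M) :
    (∀ k, (∀ j₀, 0 ≤ ξ j₀ k / ∑ m, ξ m k) ∧ ∑ j₀, ξ j₀ k / ∑ m, ξ m k = 1) ∧
    ∀ (y : ℝ) (x : X),
      |∑ j₀, ∑ k, ξ j₀ k * Bbar j₀ y * B k x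
        - ∑ j₀, ∑ k, (ξ j₀ k / ∑ m, ξ m k) * Bbar j₀ y * B k x| ≤ 2 * δ * M := by
  have hs : ∀ k, (1:ℝ)/2 < ∑ m, ξ m k := by
    intro k
    have h := abs_le.1 (hdefect k)
    linarith [h.1, h.2]
  have hspos : ∀ k, (0:ℝ) < ∑ m, ξ m k := fun k => lt_trans (by norm_num) (hs k)
  constructor
  · intro k
    refine ⟨fun j₀ => div_nonneg (hξ j₀ k) (hspos k).le, ?_⟩
    rw [← Finset.sum_div, div_self (hspos k).ne']
  · intro y x
    have key : ∀ j₀ k, |ξ j₀ k - ξ j₀ k / ∑ m, ξ m k| ≤ 2 * δ * ξ j₀ k := by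
      intro j₀ k
      have hsp := hspos k
      have h1 : ξ j₀ k - ξ j₀ k / ∑ m, ξ m k
          = ξ j₀ k * (((∑ m, ξ m k) - 1) / ∑ m, ξ m k) := by
        field_simp
      rw [h1, abs_mul, abs_of_nonneg (hξ j₀ k)]
      have h2 : |(∑ m, ξ m k) - 1| ≤ δ := by rw [abs_sub_comm]; exact hdefect k
      have h3 : |((∑ m, ξ m k) - 1) / ∑ m, ξ m k| ≤ 2 * δ := by
        rw [abs_div, abs_of_pos hsp, div_le_iff₀ hsp]
        nlinarith [hs k, abs_nonneg ((∑ m, ξ m k) - 1)]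
      nlinarith [hξ j₀ k, abs_nonneg (((∑ m, ξ m k) - 1) / ∑ m, ξ m k)]
    have hgnn : 0 ≤ ∑ j₀, ∑ k, ξ j₀ k * Bbar j₀ y * B k x := by
      apply Finset.sum_nonneg; intro j₀ _
      apply Finset.sum_nonneg; intro k _
      exact mul_nonneg (mul_nonneg (hξ j₀ k) (hBbar j₀ y)) (hB k x)
    have hgM : ∑ j₀, ∑ k, ξ j₀ k * Bbar j₀ y * B k x ≤ M :=
      le_trans (le_abs_self _) (hbound y x)
    calc |∑ j₀, ∑ k, ξ j₀ k * Bbar j₀ y * B k x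
        - ∑ j₀, ∑ k, (ξ j₀ k / ∑ m, ξ m k) * Bbar j₀ y * B k x|
        = |∑ j₀, ∑ k, (ξ j₀ k - ξ j₀ k / ∑ m, ξ m k) * Bbar j₀ y * B k x| := by
          rw [← Finset.sum_sub_distrib]
          congr 1
          apply Finset.sum_congr rfl; intro j₀ _
          rw [← Finset.sum_sub_distrib]
          apply Finset.sum_congr rfl; intro k _
          ring
      _ ≤ ∑ j₀, ∑ k, |(ξ j₀ k - ξ j₀ k / ∑ m, ξ m k) * Bbar j₀ y * B k x| := by
          refine le_trans (Finset.abs_sum_le_sum_abs _ _) ?_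
          exact Finset.sum_le_sum fun j₀ _ => Finset.abs_sum_le_sum_abs _ _
      _ ≤ ∑ j₀, ∑ k, 2 * δ * (ξ j₀ k * Bbar j₀ y * B k x) := by
          refine Finset.sum_le_sum fun j₀ _ => Finset.sum_le_sum fun k _ => ?_
          rw [abs_mul, abs_mul, abs_of_nonneg (hBbar j₀ y), abs_of_nonneg (hB k x)]
          have h4 := mul_le_mul_of_nonneg_right
            (mul_le_mul_of_nonneg_right (key j₀ k) (hBbar j₀ y)) (hB k x)
          calc |ξ j₀ k - ξ j₀ k / ∑ m, ξ m k| * Bbar j₀ y * B k x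
              ≤ 2 * δ * ξ j₀ k * Bbar j₀ y * B k x := h4
            _ = 2 * δ * (ξ j₀ k * Bbar j₀ y * B k x) := by ring
      _ = 2 * δ * ∑ j₀, ∑ k, ξ j₀ k * Bbar j₀ y * B k x := by
          rw [Finset.mul_sum]
          exact Finset.sum_congr rfl fun j₀ _ => by rw [Finset.mul_sum]
      _ ≤ 2 * δ * M := by
          apply mul_le_mul_of_nonneg_left hgM
          linarith
end

section
/- If a zero-truncated Poisson random variable N with mean λ is used to define J = ⌊N^{1/(r+1)}⌋, then the prior probability mass function of J satisfies exp{−c′ j^{r+1}(log j)} ≤ P(J = j) ≤ exp{−c″ j^{r+1}(log j)} for all sufficiently large j, for some constants c′ ≥ c″ > 0 depending on λ and r. -/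
open Real

private lemma pow_self_le_exp_mul_factorial (m : ℕ) :
    (m : ℝ) ^ m ≤ Real.exp m * m.factorial := by
  have hsum := Real.sum_le_exp_of_nonneg (x := (m : ℝ)) (Nat.cast_nonneg m) (m + 1)
  have hsingle : (m : ℝ) ^ m / m.factorial ≤
      ∑ i ∈ Finset.range (m + 1), (m : ℝ) ^ i / i.factorial :=
    Finset.single_le_sum (f := fun i => (m : ℝ) ^ i / i.factorial)
      (fun i _ => by positivity) (Finset.self_mem_range_succ m)
  have hfac : (0 : ℝ) < m.factorial := by exact_mod_cast m.factorial_pos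
  have := hsingle.trans hsum
  rw [div_le_iff₀ hfac] at this
  linarith

private lemma ratio_mono {lam : ℝ} (hlam : 0 ≤ lam) {m : ℕ} (h : lam ≤ m + 1) :
    ∀ n, m ≤ n → lam ^ n / n.factorial ≤ lam ^ m / m.factorial := by
  intro n hn
  induction n, hn using Nat.le_induction with
  | base => exact le_rfl
  | succ n hn ih =>
    have hn1 : lam ≤ (n : ℝ) + 1 := h.trans (by exact_mod_cast Nat.succ_le_succ hn)
    have hf : (0 : ℝ) < n.factorial := by exact_mod_cast n.factorial_pos
    calc lam ^ (n + 1) / (n + 1).factorial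
        = (lam / ((n : ℝ) + 1)) * (lam ^ n / n.factorial) := by
          rw [Nat.factorial_succ]; push_cast; field_simp; ring
      _ ≤ 1 * (lam ^ n / n.factorial) := by
          apply mul_le_mul_of_nonneg_right _ (by positivity)
          rw [div_le_one (by positivity)]; exact hn1
      _ = lam ^ n / n.factorial := one_mul _
      _ ≤ lam ^ m / m.factorial := ih

private lemma exp_ineq_lower (R La Lc M L : ℝ) (hM : 1 ≤ M) (hL : 1 ≤ L) :
    -(R + 2 + |La| + |Lc|) * M * L ≤ Lc + M * La - M * ((R + 1) * L) := by
  have e3 := neg_abs_le Lc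
  have e4 := neg_abs_le La
  nlinarith [mul_nonneg (abs_nonneg Lc) (by nlinarith : (0:ℝ) ≤ M * L - 1),
    mul_nonneg (mul_nonneg (abs_nonneg La) (by linarith : (0:ℝ) ≤ M)) (by linarith : (0:ℝ) ≤ L - 1),
    mul_le_mul_of_nonneg_right e4 (by linarith : (0:ℝ) ≤ M),
    mul_pos (lt_of_lt_of_le one_pos hM) (lt_of_lt_of_le one_pos hL)]

private lemma exp_ineq_upper (R La Lc M L lx : ℝ) (hR : 1 ≤ R)
    (hM3 : 3 * (2 * (R + 1) + |Lc| + 1 + |La|) ≤ M)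
    (hL3 : 3 * (2 * (R + 1) + |Lc| + 1 + |La|) ≤ L)
    (hM1 : 1 ≤ M) (hL1 : 1 ≤ L) (hlx : lx ≤ 2 * L) :
    (R + 1) * lx + Lc + M * La + M - M * ((R + 1) * L) ≤ -1 * M * L := by
  set D : ℝ := 2 * (R + 1) + |Lc| + 1 + |La| with hD
  have e1 := le_abs_self Lc
  have e2 := le_abs_self La
  have hL0 : (0:ℝ) ≤ L := by linarith
  have hM0 : (0:ℝ) ≤ M := by linarith
  have haC := abs_nonneg Lc
  have haL := abs_nonneg La
  nlinarith [mul_nonneg (by simp only [hD]; linarith : (0:ℝ) ≤ D - 2*(R+1)) hL0,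
    mul_nonneg (by linarith : (0:ℝ) ≤ R + 1) (by linarith : (0:ℝ) ≤ 2*L - lx),
    mul_nonneg (by linarith : (0:ℝ) ≤ M - 3*D) hL0,
    mul_nonneg (by linarith : (0:ℝ) ≤ L - 3*D) hM0,
    mul_nonneg (mul_nonneg (by linarith : (0:ℝ) ≤ R - 1) hM0) hL0,
    mul_nonneg hM0 (by simp only [hD]; linarith : (0:ℝ) ≤ D - (|La| + 1)),
    mul_le_mul_of_nonneg_right e2 hM0,
    mul_nonneg hM0 (by linarith : (0:ℝ) ≤ L - 1)]

/-- If a zero-truncated Poisson random variable `N` with mean parameter `λ` is used to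
define `J = ⌊N^{1/(r+1)}⌋` (so that `{J = j} = {j^{r+1} ≤ N < (j+1)^{r+1}}`), then the
prior probability mass function of `J` satisfies
`exp(-c' j^{r+1} log j) ≤ P(J = j) ≤ exp(-c'' j^{r+1} log j)` for all sufficiently
large `j`, for constants `c' ≥ c'' > 0` depending on `λ` and `r`. -/
theorem truncated_poisson_root_pmf (r : ℕ) (hr : 1 ≤ r) (lam : ℝ) (hlam : 0 < lam) :
    ∃ c' c'' : ℝ, 0 < c'' ∧ c'' ≤ c' ∧ ∃ N : ℕ, ∀ j : ℕ, N ≤ j →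
      Real.exp (-c' * (j : ℝ) ^ (r + 1) * Real.log j)
          ≤ (∑ n ∈ Finset.Ico (j ^ (r + 1)) ((j + 1) ^ (r + 1)),
              Real.exp (-lam) * lam ^ n / ((n.factorial : ℝ) * (1 - Real.exp (-lam)))) ∧
        (∑ n ∈ Finset.Ico (j ^ (r + 1)) ((j + 1) ^ (r + 1)),
            Real.exp (-lam) * lam ^ n / ((n.factorial : ℝ) * (1 - Real.exp (-lam))))
          ≤ Real.exp (-c'' * (j : ℝ) ^ (r + 1) * Real.log j) := by
  have he : Real.exp (-lam) < 1 := Real.exp_lt_one_iff.mpr (by linarith)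
  have he' : (0:ℝ) < 1 - Real.exp (-lam) := by linarith
  set C : ℝ := Real.exp (-lam) / (1 - Real.exp (-lam)) with hCdef
  have hC0 : 0 < C := div_pos (Real.exp_pos _) he'
  set D : ℝ := 2 * ((r : ℝ) + 1) + |Real.log C| + 1 + |Real.log lam| with hDdef
  have hr1 : (1 : ℝ) ≤ (r : ℝ) := by exact_mod_cast hr
  set c' : ℝ := (r : ℝ) + 2 + |Real.log lam| + |Real.log C| with hc'def
  refine ⟨c', 1, one_pos, ?_, ⌈Real.exp (3 * D)⌉₊ + 3, ?_⟩
  · have := abs_nonneg (Real.log C); have := abs_nonneg (Real.log lam)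
    simp only [hc'def]; linarith
  intro j hj
  set x : ℝ := (j : ℝ) with hxdef
  set m : ℕ := j ^ (r + 1) with hmdef
  set M : ℝ := ((m : ℕ) : ℝ) with hMdef
  set L : ℝ := Real.log x with hLdef
  have hxE : Real.exp (3 * D) ≤ x := by
    rw [hxdef]
    calc Real.exp (3 * D) ≤ (⌈Real.exp (3 * D)⌉₊ : ℝ) := Nat.le_ceil _
      _ ≤ (j : ℝ) := by exact_mod_cast le_trans (Nat.le_add_right _ 3) hj
  have hD5 : (5 : ℝ) ≤ D := by
    have := abs_nonneg (Real.log C); have := abs_nonneg (Real.log lam)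
    simp only [hDdef]; linarith
  have hx0 : (0 : ℝ) < x := lt_of_lt_of_le (Real.exp_pos _) hxE
  have hx1 : (1 : ℝ) ≤ x := le_trans (Real.one_le_exp (by linarith)) hxE
  have hL3D : 3 * D ≤ L := (Real.le_log_iff_exp_le hx0).mpr hxE
  have hL1 : (1 : ℝ) ≤ L := by linarith
  have hMcast : M = x ^ (r + 1) := by rw [hMdef, hmdef, hxdef]; push_cast; ring
  have hxM : x ≤ M := by rw [hMcast]; exact le_self_pow₀ hx1 (Nat.succ_ne_zero r)
  have hM1 : (1 : ℝ) ≤ M := hx1.trans hxM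
  have hM3D : 3 * D ≤ M := by
    have h1 : 3 * D ≤ Real.exp (3 * D) := by
      have := Real.add_one_le_exp (3 * D); linarith
    linarith
  have hlamM1 : lam ≤ M + 1 := by
    have h1 : lam ≤ Real.exp (3 * D) := by
      calc lam = Real.exp (Real.log lam) := (Real.exp_log hlam).symm
        _ ≤ Real.exp (3 * D) := Real.exp_le_exp.mpr (by
            have := le_abs_self (Real.log lam); have := abs_nonneg (Real.log C)
            simp only [hDdef]; linarith)
    linarith
  have hlogM : Real.log M = ((r : ℝ) + 1) * L := by
    rw [hMcast, hLdef, Real.log_pow]; push_cast; ring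
  have hfacM : (0 : ℝ) < m.factorial := by exact_mod_cast m.factorial_pos
  have hM0 : (0 : ℝ) < M := by linarith
  have hmem : m ∈ Finset.Ico m ((j + 1) ^ (r + 1)) :=
    Finset.mem_Ico.mpr ⟨le_rfl, by
      rw [hmdef]; exact Nat.pow_lt_pow_left (Nat.lt_succ_self j) (Nat.succ_ne_zero r)⟩
  have hDunfold : 3 * (2 * ((r:ℝ) + 1) + |Real.log C| + 1 + |Real.log lam|) = 3 * D := by
    rw [hDdef]
  clear_value C c' D m M L x
  have hterm : ∀ n : ℕ, Real.exp (-lam) * lam ^ n / ((n.factorial : ℝ) * (1 - Real.exp (-lam)))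
      = C * (lam ^ n / n.factorial) := by
    intro n
    have hf : ((n.factorial : ℝ)) ≠ 0 := by
      have : (0:ℝ) < n.factorial := by exact_mod_cast n.factorial_pos
      linarith
    rw [hCdef]; field_simp
  constructor
  · -- lower bound
    have h1 : Real.exp (-lam) * lam ^ m / ((m.factorial : ℝ) * (1 - Real.exp (-lam))) ≤
        ∑ n ∈ Finset.Ico m ((j + 1) ^ (r + 1)),
          Real.exp (-lam) * lam ^ n / ((n.factorial : ℝ) * (1 - Real.exp (-lam))) := by
      apply Finset.single_le_sum
        (f := fun n : ℕ => Real.exp (-lam) * lam ^ n / ((n.factorial : ℝ) * (1 - Real.exp (-lam))))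
        _ hmem
      intro i _
      have : (0:ℝ) < i.factorial := by exact_mod_cast i.factorial_pos
      positivity
    refine le_trans ?_ h1
    rw [hterm m]
    have hfle : (m.factorial : ℝ) ≤ M ^ m := by
      rw [hMdef]; exact_mod_cast Nat.factorial_le_pow m
    have h2 : C * (lam ^ m / M ^ m) ≤ C * (lam ^ m / m.factorial) := by
      apply mul_le_mul_of_nonneg_left _ hC0.le
      gcongr
    refine le_trans ?_ h2
    have hid : C * (lam ^ m / M ^ m) =
        Real.exp (Real.log C + (m : ℝ) * Real.log lam - (m : ℝ) * Real.log M) := by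
      rw [Real.exp_sub, Real.exp_add, Real.exp_log hC0, Real.exp_nat_mul, Real.exp_nat_mul,
        Real.exp_log hlam, Real.exp_log hM0]
      ring
    rw [hid, ← hMcast, ← hMdef, hlogM]
    apply Real.exp_le_exp.mpr
    rw [hc'def]
    exact exp_ineq_lower (r : ℝ) (Real.log lam) (Real.log C) M L hM1 hL1
  · -- upper bound
    have hub : ∀ n ∈ Finset.Ico m ((j + 1) ^ (r + 1)),
        Real.exp (-lam) * lam ^ n / ((n.factorial : ℝ) * (1 - Real.exp (-lam)))
          ≤ C * (lam ^ m / m.factorial) := by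
      intro n hn
      rw [hterm n]
      apply mul_le_mul_of_nonneg_left _ hC0.le
      exact ratio_mono hlam.le (by rw [← hMdef]; linarith) n (Finset.mem_Ico.mp hn).1
    have h2 := Finset.sum_le_card_nsmul _ _ _ hub
    rw [Nat.card_Ico, nsmul_eq_mul] at h2
    have hcard : (((j + 1) ^ (r + 1) - m : ℕ) : ℝ) ≤ (x + 1) ^ (r + 1) := by
      have h3 : ((j + 1) ^ (r + 1) - m : ℕ) ≤ (j + 1) ^ (r + 1) := Nat.sub_le _ _
      calc (((j + 1) ^ (r + 1) - m : ℕ) : ℝ) ≤ (((j + 1) ^ (r + 1) : ℕ) : ℝ) := by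
            exact_mod_cast h3
        _ = (x + 1) ^ (r + 1) := by rw [hxdef]; push_cast; ring
    have htm0 : 0 ≤ C * (lam ^ m / m.factorial) := by positivity
    have h3 : (∑ n ∈ Finset.Ico m ((j + 1) ^ (r + 1)),
        Real.exp (-lam) * lam ^ n / ((n.factorial : ℝ) * (1 - Real.exp (-lam))))
        ≤ (x + 1) ^ (r + 1) * (C * (lam ^ m / m.factorial)) :=
      h2.trans (mul_le_mul_of_nonneg_right hcard htm0)
    refine h3.trans ?_
    have hkey : lam ^ m / m.factorial ≤ lam ^ m * Real.exp M / M ^ m := by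
      rw [div_le_div_iff₀ hfacM (by positivity)]
      have h4 : (M : ℝ) ^ m ≤ Real.exp M * m.factorial := by
        rw [hMdef]; exact pow_self_le_exp_mul_factorial m
      calc lam ^ m * M ^ m ≤ lam ^ m * (Real.exp M * m.factorial) :=
            mul_le_mul_of_nonneg_left h4 (by positivity)
        _ = lam ^ m * Real.exp M * m.factorial := by ring
    have h5 : (x + 1) ^ (r + 1) * (C * (lam ^ m / m.factorial))
        ≤ (x + 1) ^ (r + 1) * (C * (lam ^ m * Real.exp M / M ^ m)) := by
      apply mul_le_mul_of_nonneg_left _ (by positivity)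
      exact mul_le_mul_of_nonneg_left hkey hC0.le
    refine h5.trans ?_
    have hid : (x + 1) ^ (r + 1) * (C * (lam ^ m * Real.exp M / M ^ m)) =
        Real.exp (((r : ℝ) + 1) * Real.log (x + 1) + Real.log C + (m : ℝ) * Real.log lam + M
          - (m : ℝ) * Real.log M) := by
      rw [show ((r : ℝ) + 1) * Real.log (x + 1) = ((r + 1 : ℕ) : ℝ) * Real.log (x + 1) by
        push_cast; ring]
      rw [Real.exp_sub, Real.exp_add, Real.exp_add, Real.exp_add,
        Real.exp_nat_mul, Real.exp_nat_mul, Real.exp_nat_mul,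
        Real.exp_log hC0, Real.exp_log hlam, Real.exp_log hM0, Real.exp_log (by linarith)]
      ring
    rw [hid, ← hMcast, ← hMdef, hlogM]
    apply Real.exp_le_exp.mpr
    have hlogx1 : Real.log (x + 1) ≤ 2 * L := by
      have hx2 : (2:ℝ) ≤ x := by
        have := Real.add_one_le_exp (3 * D); linarith
      have hsq : x + 1 ≤ x ^ 2 := by nlinarith [mul_nonneg (by linarith : (0:ℝ) ≤ x - 2) (by linarith : (0:ℝ) ≤ x)]
      calc Real.log (x + 1) ≤ Real.log (x ^ 2) := Real.log_le_log (by linarith) hsq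
        _ = 2 * L := by rw [hLdef, Real.log_pow]; push_cast; ring
    exact exp_ineq_upper (r : ℝ) (Real.log lam) (Real.log C) M L (Real.log (x + 1)) hr1
      (by rw [hDunfold]; exact hM3D) (by rw [hDunfold]; exact hL3D) hM1 hL1 hlogx1
end

section
/- Fix integers r̄ₙ, J̃ₙ, p ≥ 1 and ε ∈ (0,1). The sieve F_n of all conditional densities of the form h(x,y) = Σ θ_{j₀,j_{m₁},…,j_{m_r}} B̄_{j₀}(y) Π_k B_{j_{m_k}}(x_{m_k}) with r ≤ r̄ₙ, subsets {m₁<⋯<m_r} ⊆ {1,…,p}, basis sizes J₀, J_{m₁},…,J_{m_r} ≤ J̃ₙ, and simplex-valued coefficient vectors, has ε²-covering number in L1 at most Σ_{r=1}^{r̄ₙ} (p choose r) J̃ₙ^{r+1} (3/ε²)^{J̃ₙ^{r+1}}. Hence log D(ε², F_n, ‖·‖₁) ≤ log r̄ₙ + r̄ₙ log p + (r̄ₙ+1) log J̃ₙ + J̃ₙ^{r̄ₙ+1} log(3/ε²). -/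
open MeasureTheory Real Set Pointwise
open scoped ENNReal NNReal

variable {d : ℕ}

private lemma n1_ball_eq (x : Fin d → ℝ) {r : ℝ} (hr : 0 < r) :
    {y : Fin d → ℝ | ∑ i, |y i - x i| < r} =
      x +ᵥ (r • {y : Fin d → ℝ | ∑ i, |y i| < 1}) := by
  ext y
  simp only [Set.mem_setOf_eq, Set.mem_vadd_set_iff_neg_vadd_mem,
    Set.mem_smul_set_iff_inv_smul_mem₀ (ne_of_gt hr)]
  have : ∀ i, |(r⁻¹ • (-x +ᵥ y)) i| = r⁻¹ * |y i - x i| := by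
    intro i
    simp [abs_mul, abs_of_nonneg (le_of_lt (inv_pos.2 hr)), sub_eq_neg_add]
  simp only [this, ← Finset.mul_sum]
  rw [inv_mul_lt_iff₀ hr, mul_one]

private lemma n1_ball_open (x : Fin d → ℝ) (r : ℝ) :
    IsOpen {y : Fin d → ℝ | ∑ i, |y i - x i| < r} := by
  apply isOpen_lt _ continuous_const
  exact continuous_finset_sum _ fun i _ => ((continuous_apply i).sub continuous_const).abs

private lemma sep_card_bound {η : ℝ} (hη0 : 0 < η) (hη1 : η ≤ 1)
    (P : Finset (Fin d → ℝ)) (hP1 : ∀ x ∈ P, ∑ i, |x i| ≤ 1)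
    (hsep : ∀ x ∈ P, ∀ y ∈ P, x ≠ y → η < ∑ i, |x i - y i|) :
    (P.card : ℝ) ≤ (3 / η) ^ d := by
  classical
  set U₀ : Set (Fin d → ℝ) := {y | ∑ i, |y i| < 1} with hU₀
  have hU₀open : IsOpen U₀ := by
    have := n1_ball_open (0 : Fin d → ℝ) 1
    simpa using this
  have hc0 : 0 < volume U₀ := hU₀open.measure_pos volume ⟨0, by simp [hU₀]⟩
  have hcT : volume U₀ < ⊤ := by
    refine lt_of_le_of_lt (measure_mono ?_) (measure_ball_lt_top (x := (0 : Fin d → ℝ)) (r := 1))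
    intro y hy
    simp only [hU₀, Set.mem_setOf_eq] at hy
    rw [Metric.mem_ball, dist_zero_right]
    calc ‖y‖ ≤ ∑ i, |y i| := by
          refine (pi_norm_le_iff_of_nonneg (Finset.sum_nonneg fun i _ => abs_nonneg _)).2
            fun i => ?_
          rw [Real.norm_eq_abs]
          exact Finset.single_le_sum (fun j _ => abs_nonneg (y j)) (Finset.mem_univ i)
      _ < 1 := hy
  -- balls
  set U : (Fin d → ℝ) → Set (Fin d → ℝ) := fun x => {y | ∑ i, |y i - x i| < η/2} with hU
  have hvol : ∀ x, volume (U x) = ENNReal.ofReal ((η/2)^d) * volume U₀ := by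
    intro x
    rw [hU]
    simp only
    rw [n1_ball_eq x (by linarith), measure_vadd, Measure.addHaar_smul_of_nonneg volume (by linarith),
      Module.finrank_fin_fun]
  have hdisj : (↑P : Set (Fin d → ℝ)).PairwiseDisjoint U := by
    intro x hx y hy hxy
    refine Set.disjoint_left.2 fun z hzx hzy => ?_
    simp only [hU, Set.mem_setOf_eq] at hzx hzy
    have := hsep x hx y hy hxy
    have htri : ∑ i, |x i - y i| ≤ (∑ i, |z i - x i|) + ∑ i, |z i - y i| := by
      rw [← Finset.sum_add_distrib]
      refine Finset.sum_le_sum fun i _ => ?_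
      have h1 : |x i - y i| = |(z i - y i) - (z i - x i)| := by ring_nf
      exact h1 ▸ ((abs_sub _ _).trans (le_of_eq (add_comm _ _)))
    linarith
  have hsub : (⋃ x ∈ P, U x) ⊆ (1 + η/2) • U₀ := by
    intro y hy
    simp only [Set.mem_iUnion] at hy
    obtain ⟨x, hx, hyx⟩ := hy
    simp only [hU, Set.mem_setOf_eq] at hyx
    have h1 : ∑ i, |y i| < 1 + η/2 := by
      have : ∑ i, |y i| ≤ (∑ i, |x i|) + ∑ i, |y i - x i| := by
        rw [← Finset.sum_add_distrib]
        refine Finset.sum_le_sum fun i _ => ?_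
        have := abs_sub_abs_le_abs_sub (y i) (x i)
        linarith
      have := hP1 x hx
      linarith
    rw [Set.mem_smul_set_iff_inv_smul_mem₀ (by positivity)]
    simp only [hU₀, Set.mem_setOf_eq]
    have : ∀ i, |((1 + η/2)⁻¹ • y) i| = (1+η/2)⁻¹ * |y i| := fun i => by
      simp [abs_mul, abs_of_nonneg (le_of_lt (inv_pos.2 (by positivity : (0:ℝ) < 1 + η/2)))]
    simp only [this, ← Finset.mul_sum]
    rw [inv_mul_lt_iff₀ (by positivity), mul_one]
    exact h1
  have hmeas := measure_biUnion_finset (μ := volume) hdisj (fun x _ => (n1_ball_open x (η/2)).measurableSet)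
  have key : (P.card : ℝ≥0∞) * (ENNReal.ofReal ((η/2)^d) * volume U₀)
      ≤ ENNReal.ofReal ((1+η/2)^d) * volume U₀ := by
    calc (P.card : ℝ≥0∞) * (ENNReal.ofReal ((η/2)^d) * volume U₀)
        = ∑ x ∈ P, volume (U x) := by
          rw [Finset.sum_congr rfl fun x _ => hvol x, Finset.sum_const, nsmul_eq_mul]
      _ = volume (⋃ x ∈ P, U x) := hmeas.symm
      _ ≤ volume ((1 + η/2) • U₀) := measure_mono hsub
      _ = ENNReal.ofReal ((1+η/2)^d) * volume U₀ := by
          rw [Measure.addHaar_smul_of_nonneg volume (by positivity), Module.finrank_fin_fun]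
  rw [← mul_assoc] at key
  have key2 : (P.card : ℝ≥0∞) * ENNReal.ofReal ((η/2)^d) ≤ ENNReal.ofReal ((1+η/2)^d) :=
    (ENNReal.mul_le_mul_iff_left (ne_of_gt hc0) (ne_of_lt hcT)).1 key
  have key3 : (P.card : ℝ) * (η/2)^d ≤ (1+η/2)^d := by
    have := key2
    rw [← ENNReal.ofReal_natCast, ← ENNReal.ofReal_mul (by positivity)] at this
    exact (ENNReal.ofReal_le_ofReal_iff (by positivity)).1 this
  have hpow : (1+η/2)^d ≤ (3/η)^d * (η/2)^d := by
    rw [← mul_pow]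
    refine pow_le_pow_left₀ (by positivity) ?_ d
    rw [div_mul_div_comm, le_div_iff₀ (by positivity)]
    ring_nf
    nlinarith
  rw [← le_div_iff₀ (by positivity : (0:ℝ) < (η/2)^d)] at key3
  refine key3.trans ?_
  rw [div_le_iff₀ (by positivity)]
  exact hpow


private lemma simplex_net (d : ℕ) {η : ℝ} (hη0 : 0 < η) (hη1 : η ≤ 1) :
    ∃ Θ : Finset (Fin d → ℝ), (Θ.card : ℝ) ≤ (3 / η) ^ d ∧
      ∀ θ : Fin d → ℝ, (∀ i, 0 ≤ θ i) → ∑ i, θ i = 1 →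
        ∃ θ' ∈ Θ, ∑ i, |θ i - θ' i| ≤ η := by
  classical
  set S : Set (Fin d → ℝ) := {θ | (∀ i, 0 ≤ θ i) ∧ ∑ i, θ i = 1} with hS
  set Sep : Finset (Fin d → ℝ) → Prop :=
    fun P => (↑P ⊆ S) ∧ ∀ x ∈ P, ∀ y ∈ P, x ≠ y → η < ∑ i, |x i - y i| with hSep
  have hbound : ∀ P, Sep P → (P.card : ℝ) ≤ (3 / η) ^ d := by
    intro P hP
    refine sep_card_bound hη0 hη1 P (fun x hx => ?_) hP.2
    have := hP.1 hx
    simp only [hS, Set.mem_setOf_eq] at this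
    calc ∑ i, |x i| = ∑ i, x i := Finset.sum_congr rfl fun i _ => abs_of_nonneg (this.1 i)
      _ = 1 := this.2
      _ ≤ 1 := le_refl 1
  set C : Set ℕ := {n | ∃ P, Sep P ∧ P.card = n} with hC
  have hCne : C.Nonempty := ⟨0, ∅, ⟨by simp, by simp⟩, rfl⟩
  have hCbdd : BddAbove C := by
    refine ⟨⌈(3/η)^d⌉₊, fun n hn => ?_⟩
    obtain ⟨P, hP, rfl⟩ := hn
    have := (hbound P hP).trans (Nat.le_ceil _)
    exact_mod_cast this
  obtain ⟨P, hP, hPcard⟩ := Nat.sSup_mem hCne hCbdd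
  refine ⟨P, (hPcard ▸ hbound P hP : _), ?_⟩
  intro θ hθ0 hθ1
  by_contra hcon
  push_neg at hcon
  have hθS : θ ∈ S := ⟨hθ0, hθ1⟩
  have hθP : θ ∉ P := by
    intro h
    have := hcon θ h
    simp at this
    linarith
  have hins : Sep (insert θ P) := by
    constructor
    · intro x hx
      rcases Finset.mem_insert.1 hx with rfl | hx
      · exact hθS
      · exact hP.1 hx
    · intro x hx y hy hxy
      rcases Finset.mem_insert.1 hx with hx1 | hx2 <;>
        rcases Finset.mem_insert.1 hy with hy1 | hy2
      · exact absurd (hx1.trans hy1.symm) hxy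
      · subst hx1
        exact hcon y hy2
      · rw [hy1]
        have h2 := hcon x hx2
        have h3 : ∑ i, |x i - θ i| = ∑ i, |θ i - x i| :=
          Finset.sum_congr rfl fun i _ => abs_sub_comm _ _
        rw [h3]
        exact h2
      · exact hP.2 x hx2 y hy2 hxy
  have : P.card + 1 ∈ C := ⟨insert θ P, hins, by rw [Finset.card_insert_of_notMem hθP]⟩
  have := le_csSup hCbdd this
  rw [hPcard] at this
  omega

private lemma sum_Icc_fin (n : ℕ) (f : ℕ → ℝ) :
    ∑ j ∈ Finset.Icc 1 n, f j = ∑ i : Fin n, f (1 + i) := by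
  have h1 : Finset.Icc 1 n = Finset.map (addLeftEmbedding 1) (Finset.range n) := by
    rw [Finset.range_eq_Ico, Finset.map_add_left_Ico, ← Finset.Ico_add_one_right_eq_Icc]
    congr 1
    omega
  rw [h1, Finset.sum_map, Fin.sum_univ_eq_sum_range (fun i => f (1 + i)) n]
  rfl

private lemma coef_net (r : ℕ) (J : Fin (r + 1) → ℕ) {η : ℝ} (hη0 : 0 < η) (hη1 : η ≤ 1) :
    ∃ C : Finset (ℕ → (Fin r → ℕ) → ℝ),
      (C.card : ℝ) ≤ ((3 / η) ^ (J 0)) ^ (∏ k : Fin r, J k.succ) ∧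
      ∀ θ : ℕ → (Fin r → ℕ) → ℝ,
        (∀ jv, (∀ j₀, 0 ≤ θ j₀ jv) ∧ ∑ j₀ ∈ Finset.Icc 1 (J 0), θ j₀ jv = 1) →
        ∃ θ' ∈ C, ∀ jv ∈ Fintype.piFinset (fun k : Fin r => Finset.Icc 1 (J k.succ)),
          ∑ j₀ ∈ Finset.Icc 1 (J 0), |θ j₀ jv - θ' j₀ jv| ≤ η := by
  classical
  obtain ⟨Θ, hΘcard, hΘnet⟩ := simplex_net (J 0) hη0 hη1
  set box : Finset (Fin r → ℕ) := Fintype.piFinset (fun k : Fin r => Finset.Icc 1 (J k.succ))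
    with hbox
  have hboxcard : box.card = ∏ k : Fin r, J k.succ := by
    rw [hbox, Fintype.card_piFinset]
    exact Finset.prod_congr rfl fun k _ => by rw [Nat.card_Icc]; omega
  set F : (∀ jv ∈ box, (Fin (J 0) → ℝ)) → (ℕ → (Fin r → ℕ) → ℝ) :=
    fun f => fun j₀ jv =>
      if h : jv ∈ box then
        (if h2 : 1 ≤ j₀ ∧ j₀ ≤ J 0 then f jv h ⟨j₀ - 1, by omega⟩ else 0)
      else 0 with hF
  refine ⟨(box.pi (fun _ => Θ)).image F, ?_, ?_⟩
  · calc ((((box.pi fun _ => Θ)).image F).card : ℝ) ≤ ((box.pi fun _ => Θ)).card :=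
          Nat.cast_le.2 Finset.card_image_le
      _ = (Θ.card : ℝ) ^ box.card := by
          rw [Finset.card_pi, Finset.prod_const, hboxcard]
          push_cast
          rfl
      _ ≤ ((3 / η) ^ (J 0)) ^ (∏ k : Fin r, J k.succ) := by
          rw [hboxcard]
          exact pow_le_pow_left₀ (Nat.cast_nonneg _) hΘcard _
  · intro θ hθ
    have hchoice : ∀ jv : Fin r → ℕ, ∃ v ∈ Θ,
        ∑ i : Fin (J 0), |θ (1 + i) jv - v i| ≤ η := by
      intro jv
      refine hΘnet (fun i => θ (1 + i) jv) (fun i => (hθ jv).1 _) ?_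
      rw [← sum_Icc_fin (J 0) (fun j => θ j jv)]
      exact (hθ jv).2
    set f : ∀ jv ∈ box, (Fin (J 0) → ℝ) := fun jv _ => Classical.choose (hchoice jv) with hf
    have hfmem : f ∈ box.pi (fun _ => Θ) :=
      Finset.mem_pi.2 fun jv h => (Classical.choose_spec (hchoice jv)).1
    refine ⟨F f, Finset.mem_image_of_mem F hfmem, ?_⟩
    intro jv hjv
    have hclose := (Classical.choose_spec (hchoice jv)).2
    calc ∑ j₀ ∈ Finset.Icc 1 (J 0), |θ j₀ jv - F f j₀ jv|
        = ∑ i : Fin (J 0), |θ (1 + i) jv - F f (1 + i) jv| :=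
          sum_Icc_fin (J 0) (fun j => |θ j jv - F f j jv|)
      _ = ∑ i : Fin (J 0), |θ (1 + i) jv - Classical.choose (hchoice jv) i| := by
          refine Finset.sum_congr rfl fun i _ => ?_
          have h2 : 1 ≤ 1 + (i : ℕ) ∧ 1 + (i : ℕ) ≤ J 0 := ⟨by omega, by omega⟩
          have hidx : (⟨1 + (i : ℕ) - 1, by omega⟩ : Fin (J 0)) = i := by
            apply Fin.ext
            simp
          rw [hF]
          simp only [dif_pos hjv, dif_pos h2, hidx, hf]
      _ ≤ η := hclose

private lemma dist_le (p r : ℕ) (Bbar B : ℕ → ℕ → ℝ → ℝ)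
    (hBbar0 : ∀ J j y, 0 ≤ Bbar J j y)
    (hBbarInt : ∀ J j : ℕ, 1 ≤ J → IntegrableOn (Bbar J j) (Set.Ioo (0:ℝ) 1))
    (hBbar1 : ∀ J j : ℕ, 1 ≤ J → 1 ≤ j → j ≤ J →
      (∫ y in Set.Ioo (0:ℝ) 1, Bbar J j y) = 1)
    (hB0 : ∀ J j x, 0 ≤ B J j x)
    (hB1 : ∀ J : ℕ, 1 ≤ J → ∀ x : ℝ, ∑ j ∈ Finset.Icc 1 J, B J j x = 1)
    (m : Fin r → Fin p) (J : Fin (r+1) → ℕ) (hJ : ∀ k, 1 ≤ J k)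
    (θ θ' : ℕ → (Fin r → ℕ) → ℝ) (η : ℝ)
    (hclose : ∀ jv ∈ Fintype.piFinset (fun k : Fin r => Finset.Icc 1 (J k.succ)),
      ∑ j₀ ∈ Finset.Icc 1 (J 0), |θ j₀ jv - θ' j₀ jv| ≤ η)
    (x : Fin p → ℝ) :
    ∫ y in Set.Ioo (0:ℝ) 1,
      |(∑ j₀ ∈ Finset.Icc 1 (J 0),
          ∑ jv ∈ Fintype.piFinset (fun k : Fin r => Finset.Icc 1 (J k.succ)),
          θ j₀ jv * Bbar (J 0) j₀ y * ∏ k : Fin r, B (J k.succ) (jv k) (x (m k))) -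
       (∑ j₀ ∈ Finset.Icc 1 (J 0),
          ∑ jv ∈ Fintype.piFinset (fun k : Fin r => Finset.Icc 1 (J k.succ)),
          θ' j₀ jv * Bbar (J 0) j₀ y * ∏ k : Fin r, B (J k.succ) (jv k) (x (m k)))| ≤ η := by
  classical
  set box : Finset (Fin r → ℕ) := Fintype.piFinset (fun k : Fin r => Finset.Icc 1 (J k.succ))
    with hbox
  set P : (Fin r → ℕ) → ℝ := fun jv => ∏ k : Fin r, B (J k.succ) (jv k) (x (m k)) with hP
  have hP0 : ∀ jv, 0 ≤ P jv := fun jv => Finset.prod_nonneg fun k _ => hB0 _ _ _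
  have hPsum : ∑ jv ∈ box, P jv = 1 := by
    have h := Finset.prod_univ_sum (fun k : Fin r => Finset.Icc 1 (J k.succ))
      (fun k j => B (J k.succ) j (x (m k)))
    simp only [hP]
    rw [hbox, ← h]
    exact Finset.prod_eq_one fun k _ => hB1 _ (hJ k.succ) _
  set diff : ℝ → ℝ := fun y => ∑ j₀ ∈ Finset.Icc 1 (J 0), ∑ jv ∈ box,
      (θ j₀ jv - θ' j₀ jv) * Bbar (J 0) j₀ y * P jv with hdiff
  set M : ℝ → ℝ := fun y => ∑ j₀ ∈ Finset.Icc 1 (J 0), ∑ jv ∈ box,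
      |θ j₀ jv - θ' j₀ jv| * P jv * Bbar (J 0) j₀ y with hM
  have hdiffeq : ∀ y : ℝ,
      (∑ j₀ ∈ Finset.Icc 1 (J 0), ∑ jv ∈ box,
        θ j₀ jv * Bbar (J 0) j₀ y * P jv) -
      (∑ j₀ ∈ Finset.Icc 1 (J 0), ∑ jv ∈ box,
        θ' j₀ jv * Bbar (J 0) j₀ y * P jv) = diff y := by
    intro y
    rw [hdiff, ← Finset.sum_sub_distrib]
    refine Finset.sum_congr rfl fun j₀ _ => ?_
    rw [← Finset.sum_sub_distrib]
    exact Finset.sum_congr rfl fun jv _ => by ring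
  have hIntM : IntegrableOn M (Set.Ioo (0:ℝ) 1) := by
    refine integrable_finset_sum _ fun j₀ _ => integrable_finset_sum _ fun jv _ => ?_
    exact (hBbarInt (J 0) j₀ (hJ 0)).const_mul _
  have hIntdiff : IntegrableOn diff (Set.Ioo (0:ℝ) 1) := by
    refine integrable_finset_sum _ fun j₀ _ => integrable_finset_sum _ fun jv _ => ?_
    have heq : (fun y => (θ j₀ jv - θ' j₀ jv) * Bbar (J 0) j₀ y * P jv) =
        (fun y => ((θ j₀ jv - θ' j₀ jv) * P jv) * Bbar (J 0) j₀ y) := by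
      funext y; ring
    rw [heq]
    exact (hBbarInt (J 0) j₀ (hJ 0)).const_mul _
  have habs : ∀ y, |diff y| ≤ M y := by
    intro y
    rw [hdiff, hM]
    refine (Finset.abs_sum_le_sum_abs _ _).trans (Finset.sum_le_sum fun j₀ _ => ?_)
    refine (Finset.abs_sum_le_sum_abs _ _).trans (Finset.sum_le_sum fun jv _ => ?_)
    rw [abs_mul, abs_mul, abs_of_nonneg (hBbar0 (J 0) j₀ y), abs_of_nonneg (hP0 jv)]
    ring_nf
    exact le_refl _
  have step1 : ∫ y in Set.Ioo (0:ℝ) 1,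
      |(∑ j₀ ∈ Finset.Icc 1 (J 0), ∑ jv ∈ box,
          θ j₀ jv * Bbar (J 0) j₀ y * P jv) -
       (∑ j₀ ∈ Finset.Icc 1 (J 0), ∑ jv ∈ box,
          θ' j₀ jv * Bbar (J 0) j₀ y * P jv)| = ∫ y in Set.Ioo (0:ℝ) 1, |diff y| := by
    refine integral_congr_ae (Filter.Eventually.of_forall fun y => ?_)
    dsimp only
    rw [hdiffeq y]
  rw [step1]
  have step2 : ∫ y in Set.Ioo (0:ℝ) 1, |diff y| ≤ ∫ y in Set.Ioo (0:ℝ) 1, M y :=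
    integral_mono hIntdiff.abs hIntM habs
  refine step2.trans ?_
  have step3 : ∫ y in Set.Ioo (0:ℝ) 1, M y =
      ∑ j₀ ∈ Finset.Icc 1 (J 0), ∑ jv ∈ box, |θ j₀ jv - θ' j₀ jv| * P jv := by
    rw [hM, integral_finset_sum _ fun j₀ _ => integrable_finset_sum _ fun jv _ =>
      (hBbarInt (J 0) j₀ (hJ 0)).const_mul _]
    refine Finset.sum_congr rfl fun j₀ hj₀ => ?_
    rw [integral_finset_sum _ fun jv _ => (hBbarInt (J 0) j₀ (hJ 0)).const_mul _]
    refine Finset.sum_congr rfl fun jv _ => ?_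
    rw [integral_const_mul]
    rw [Finset.mem_Icc] at hj₀
    rw [hBbar1 (J 0) j₀ (hJ 0) hj₀.1 hj₀.2, mul_one]
  rw [step3]
  have step4 : ∑ j₀ ∈ Finset.Icc 1 (J 0), ∑ jv ∈ box, |θ j₀ jv - θ' j₀ jv| * P jv
      = ∑ jv ∈ box, P jv * ∑ j₀ ∈ Finset.Icc 1 (J 0), |θ j₀ jv - θ' j₀ jv| := by
    rw [Finset.sum_comm]
    refine Finset.sum_congr rfl fun jv _ => ?_
    rw [Finset.mul_sum]
    refine Finset.sum_congr rfl fun j₀ _ => ?_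
    ring
  rw [step4]
  calc ∑ jv ∈ box, P jv * ∑ j₀ ∈ Finset.Icc 1 (J 0), |θ j₀ jv - θ' j₀ jv|
      ≤ ∑ jv ∈ box, P jv * η :=
        Finset.sum_le_sum fun jv hjv =>
          mul_le_mul_of_nonneg_left (hclose jv hjv) (hP0 jv)
    _ = η := by rw [← Finset.sum_mul, hPsum, one_mul]

private lemma mono_card (p r : ℕ) [DecidablePred (fun m : Fin r → Fin p => StrictMono m)] :
    (Finset.univ.filter (fun m : Fin r → Fin p => StrictMono m)).card ≤ p.choose r := by
  classical
  have h1 : (Finset.powersetCard r (Finset.univ : Finset (Fin p))).card = p.choose r := by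
    rw [Finset.card_powersetCard, Finset.card_fin]
  rw [← h1]
  refine Finset.card_le_card_of_injOn (fun m => Finset.image m Finset.univ) ?_ ?_
  · intro m hm
    rw [Finset.mem_coe, Finset.mem_filter] at hm
    rw [Finset.mem_coe, Finset.mem_powersetCard]
    exact ⟨Finset.subset_univ _, by
      rw [Finset.card_image_of_injective _ hm.2.injective, Finset.card_fin]⟩
  · intro m hm m' hm' heq
    rw [Finset.mem_coe, Finset.mem_filter] at hm hm'
    have hcard : (Finset.image m Finset.univ).card = r := by
      rw [Finset.card_image_of_injective _ hm.2.injective, Finset.card_fin]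
    have hcard' : (Finset.image m' Finset.univ).card = r := by
      rw [Finset.card_image_of_injective _ hm'.2.injective, Finset.card_fin]
    simp only at heq
    have e1 := Finset.orderEmbOfFin_unique hcard'
      (fun i => heq ▸ Finset.mem_image_of_mem m (Finset.mem_univ i)) hm.2
    have e2 := Finset.orderEmbOfFin_unique hcard'
      (fun i => Finset.mem_image_of_mem m' (Finset.mem_univ i)) hm'.2
    funext i
    rw [congrFun e1 i, congrFun e2 i]


private def gfun (p : ℕ) (Bbar B : ℕ → ℕ → ℝ → ℝ) (r : ℕ) (m : Fin r → Fin p)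
    (J : Fin (r + 1) → ℕ) (θ' : ℕ → (Fin r → ℕ) → ℝ) : (Fin p → ℝ) → ℝ → ℝ :=
  fun x y => ∑ j₀ ∈ Finset.Icc 1 (J 0),
    ∑ jv ∈ Fintype.piFinset (fun k : Fin r => Finset.Icc 1 (J k.succ)),
      θ' j₀ jv * Bbar (J 0) j₀ y * ∏ k : Fin r, B (J k.succ) (jv k) (x (m k))

/-- Entropy bound for the sieve.  The sieve of all conditional densities of the form
`h(x,y) = Σ θ_{j₀,j} B̄_{j₀}(y) Π_k B_{j_{m_k}}(x_{m_k})` with model size `r ≤ r̄`,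
active predictors `m₁ < ⋯ < m_r` in `{1,…,p}`, basis sizes at most `J̃` and
simplex-valued coefficients, admits an `ε²`-cover in `L¹` of cardinality at most
`Σ_{r=1}^{r̄} (p choose r) J̃^{r+1} (3/ε²)^{J̃^{r+1}}`; hence its `L¹` metric entropy is
at most `log r̄ + r̄ log p + (r̄+1) log J̃ + J̃^{r̄+1} log(3/ε²)`. -/
theorem sieve_entropy_bound (p rbar Jt : ℕ) (hp : 1 ≤ p) (hrbar : 1 ≤ rbar)
    (hJt : 1 ≤ Jt) (ε : ℝ) (hε0 : 0 < ε) (hε1 : ε < 1)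
    (G : Measure (Fin p → ℝ)) [IsProbabilityMeasure G]
    (Bbar : ℕ → ℕ → ℝ → ℝ) (B : ℕ → ℕ → ℝ → ℝ)
    (hBbar0 : ∀ J j y, 0 ≤ Bbar J j y)
    (hBbarInt : ∀ J j : ℕ, 1 ≤ J → IntegrableOn (Bbar J j) (Set.Ioo (0 : ℝ) 1))
    (hBbar1 : ∀ J j : ℕ, 1 ≤ J → 1 ≤ j → j ≤ J →
      (∫ y in Set.Ioo (0 : ℝ) 1, Bbar J j y) = 1)
    (hB0 : ∀ J j x, 0 ≤ B J j x)
    (hB1 : ∀ J : ℕ, 1 ≤ J → ∀ x : ℝ, ∑ j ∈ Finset.Icc 1 J, B J j x = 1) :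
    ∃ T : Finset ((Fin p → ℝ) → ℝ → ℝ),
      (T.card : ℝ) ≤ ∑ r ∈ Finset.Icc 1 rbar,
          (p.choose r : ℝ) * (Jt : ℝ) ^ (r + 1) * (3 / ε ^ 2) ^ (Jt ^ (r + 1)) ∧
      (∀ g : (Fin p → ℝ) → ℝ → ℝ,
        (∃ r : ℕ, 1 ≤ r ∧ r ≤ rbar ∧ ∃ m : Fin r → Fin p, StrictMono m ∧
          ∃ J : Fin (r + 1) → ℕ, (∀ k, 1 ≤ J k ∧ J k ≤ Jt) ∧
          ∃ θ : ℕ → (Fin r → ℕ) → ℝ,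
            (∀ jv : Fin r → ℕ,
              (∀ j₀, 0 ≤ θ j₀ jv) ∧ ∑ j₀ ∈ Finset.Icc 1 (J 0), θ j₀ jv = 1) ∧
            ∀ (x : Fin p → ℝ) (y : ℝ), g x y = ∑ j₀ ∈ Finset.Icc 1 (J 0),
              ∑ jv ∈ Fintype.piFinset (fun k : Fin r => Finset.Icc 1 (J k.succ)),
                θ j₀ jv * Bbar (J 0) j₀ y *
                  ∏ k : Fin r, B (J k.succ) (jv k) (x (m k))) →
        ∃ g' ∈ T, (∫ x, (∫ y in Set.Ioo (0 : ℝ) 1, |g x y - g' x y|) ∂G) ≤ ε ^ 2) ∧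
      Real.log (∑ r ∈ Finset.Icc 1 rbar,
          (p.choose r : ℝ) * (Jt : ℝ) ^ (r + 1) * (3 / ε ^ 2) ^ (Jt ^ (r + 1)))
        ≤ Real.log rbar + rbar * Real.log p + (rbar + 1) * Real.log Jt +
            (Jt : ℝ) ^ (rbar + 1) * Real.log (3 / ε ^ 2) := by
  classical
  have hη0 : 0 < ε ^ 2 := by positivity
  have hη1 : ε ^ 2 ≤ 1 := by nlinarith
  have h3η : (1 : ℝ) ≤ 3 / ε ^ 2 := by
    rw [le_div_iff₀ hη0]; nlinarith
  set η : ℝ := ε ^ 2 with hη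
  have hnet := fun (r : ℕ) (J : Fin (r + 1) → ℕ) => coef_net r J hη0 hη1
  set netC : ∀ r : ℕ, (Fin (r + 1) → ℕ) → Finset (ℕ → (Fin r → ℕ) → ℝ) :=
    fun r J => Classical.choose (hnet r J) with hnetC
  set Ms : ∀ r : ℕ, Finset (Fin r → Fin p) :=
    fun r => Finset.univ.filter (fun m : Fin r → Fin p => StrictMono m) with hMs
  set Js : ∀ r : ℕ, Finset (Fin (r + 1) → ℕ) :=
    fun r => Fintype.piFinset (fun _ : Fin (r + 1) => Finset.Icc 1 Jt) with hJs
  set T : Finset ((Fin p → ℝ) → ℝ → ℝ) :=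
    (Finset.Icc 1 rbar).biUnion (fun r => (Ms r).biUnion (fun m =>
      (Js r).biUnion (fun J => (netC r J).image (gfun p Bbar B r m J)))) with hT
  have hJscard : ∀ r : ℕ, (Js r).card = Jt ^ (r + 1) := by
    intro r
    rw [hJs]
    rw [Fintype.card_piFinset]
    rw [Finset.prod_congr rfl fun k (_ : k ∈ Finset.univ) => (by rw [Nat.card_Icc]; omega :
      (Finset.Icc 1 Jt).card = Jt)]
    rw [Finset.prod_const, Finset.card_univ, Fintype.card_fin]
  refine ⟨T, ?_, ?_, ?_⟩
  · -- cardinality bound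
    have hN : T.card ≤ ∑ r ∈ Finset.Icc 1 rbar, ∑ m ∈ Ms r, ∑ J ∈ Js r, (netC r J).card := by
      refine (Finset.card_biUnion_le).trans (Finset.sum_le_sum fun r _ => ?_)
      refine (Finset.card_biUnion_le).trans (Finset.sum_le_sum fun m _ => ?_)
      refine (Finset.card_biUnion_le).trans (Finset.sum_le_sum fun J _ => ?_)
      exact Finset.card_image_le
    calc (T.card : ℝ)
        ≤ ∑ r ∈ Finset.Icc 1 rbar, ∑ m ∈ Ms r, ∑ J ∈ Js r, ((netC r J).card : ℝ) := by
          exact_mod_cast hN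
      _ ≤ ∑ r ∈ Finset.Icc 1 rbar,
            (p.choose r : ℝ) * (Jt : ℝ) ^ (r + 1) * (3 / η) ^ (Jt ^ (r + 1)) := by
        refine Finset.sum_le_sum fun r _ => ?_
        have hJbound : ∀ J ∈ Js r, ((netC r J).card : ℝ) ≤ (3 / η) ^ (Jt ^ (r + 1)) := by
          intro J hJmem
          have hspec := (Classical.choose_spec (hnet r J)).1
          refine hspec.trans ?_
          rw [← pow_mul]
          refine pow_le_pow_right₀ h3η ?_
          have hJk : ∀ k, J k ∈ Finset.Icc 1 Jt := by
            rw [hJs] at hJmem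
            exact fun k => (Fintype.mem_piFinset.1 hJmem) k
          have h0 : J 0 ≤ Jt := (Finset.mem_Icc.1 (hJk 0)).2
          have hprod : (∏ k : Fin r, J k.succ) ≤ Jt ^ r := by
            calc (∏ k : Fin r, J k.succ) ≤ ∏ _k : Fin r, Jt :=
                  Finset.prod_le_prod' fun k _ => (Finset.mem_Icc.1 (hJk k.succ)).2
              _ = Jt ^ r := by rw [Finset.prod_const, Finset.card_univ, Fintype.card_fin]
          calc J 0 * ∏ k : Fin r, J k.succ ≤ Jt * Jt ^ r := Nat.mul_le_mul h0 hprod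
            _ = Jt ^ (r + 1) := by ring
        calc ∑ m ∈ Ms r, ∑ J ∈ Js r, ((netC r J).card : ℝ)
            ≤ ∑ m ∈ Ms r, ∑ J ∈ Js r, (3 / η) ^ (Jt ^ (r + 1)) :=
              Finset.sum_le_sum fun m _ => Finset.sum_le_sum hJbound
          _ = (Ms r).card * ((Js r).card * (3 / η) ^ (Jt ^ (r + 1))) := by
              rw [Finset.sum_const, Finset.sum_const, nsmul_eq_mul, nsmul_eq_mul]
          _ ≤ (p.choose r : ℝ) * ((Jt : ℝ) ^ (r + 1) * (3 / η) ^ (Jt ^ (r + 1))) := by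
              refine mul_le_mul ?_ ?_
                (mul_nonneg (Nat.cast_nonneg _) (by positivity)) (Nat.cast_nonneg _)
              · exact_mod_cast mono_card p r
              · refine mul_le_mul_of_nonneg_right ?_ (by positivity)
                rw [hJscard r]
                push_cast
                exact le_refl _
          _ = (p.choose r : ℝ) * (Jt : ℝ) ^ (r + 1) * (3 / η) ^ (Jt ^ (r + 1)) := by ring
  · -- covering
    rintro g ⟨r, hr1, hr2, m, hm, J, hJ, θ, hθ, hg⟩
    have hspec := (Classical.choose_spec (hnet r J)).2 θ hθ
    obtain ⟨θ', hθ'mem, hclose⟩ := hspec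
    refine ⟨gfun p Bbar B r m J θ', ?_, ?_⟩
    · rw [hT]
      refine Finset.mem_biUnion.2 ⟨r, Finset.mem_Icc.2 ⟨hr1, hr2⟩, ?_⟩
      refine Finset.mem_biUnion.2 ⟨m, ?_, ?_⟩
      · rw [hMs]; exact Finset.mem_filter.2 ⟨Finset.mem_univ _, hm⟩
      refine Finset.mem_biUnion.2 ⟨J, ?_, ?_⟩
      · rw [hJs]
        exact Fintype.mem_piFinset.2 fun k => Finset.mem_Icc.2 ⟨(hJ k).1, (hJ k).2⟩
      exact Finset.mem_image_of_mem _ hθ'mem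
    · have hpt : ∀ x : Fin p → ℝ,
          (∫ y in Set.Ioo (0 : ℝ) 1, |g x y - gfun p Bbar B r m J θ' x y|) ≤ η := by
        intro x
        have hd := dist_le p r Bbar B hBbar0 hBbarInt hBbar1 hB0 hB1 m J
          (fun k => (hJ k).1) θ θ' η hclose x
        calc (∫ y in Set.Ioo (0 : ℝ) 1, |g x y - gfun p Bbar B r m J θ' x y|)
            = ∫ y in Set.Ioo (0 : ℝ) 1,
              |(∑ j₀ ∈ Finset.Icc 1 (J 0),
                  ∑ jv ∈ Fintype.piFinset (fun k : Fin r => Finset.Icc 1 (J k.succ)),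
                  θ j₀ jv * Bbar (J 0) j₀ y * ∏ k : Fin r, B (J k.succ) (jv k) (x (m k))) -
               (∑ j₀ ∈ Finset.Icc 1 (J 0),
                  ∑ jv ∈ Fintype.piFinset (fun k : Fin r => Finset.Icc 1 (J k.succ)),
                  θ' j₀ jv * Bbar (J 0) j₀ y * ∏ k : Fin r, B (J k.succ) (jv k) (x (m k)))| := by
              refine integral_congr_ae (Filter.Eventually.of_forall fun y => ?_)
              dsimp only
              rw [hg x y]
              rfl
          _ ≤ η := hd
      by_cases hIF : Integrable (fun x => ∫ y in Set.Ioo (0 : ℝ) 1,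
          |g x y - gfun p Bbar B r m J θ' x y|) G
      · have h1 := integral_mono hIF (integrable_const η) hpt
        rw [integral_const] at h1
        simpa [measure_univ] using h1
      · rw [integral_undef hIF]
        positivity
  · -- log bound
    set S : ℝ := ∑ r ∈ Finset.Icc 1 rbar,
        (p.choose r : ℝ) * (Jt : ℝ) ^ (r + 1) * (3 / η) ^ (Jt ^ (r + 1)) with hS
    set Tm : ℝ := (p : ℝ) ^ rbar * ((Jt : ℝ) ^ (rbar + 1) * (3 / η) ^ (Jt ^ (rbar + 1)))
      with hTm
    have hp0 : (0 : ℝ) < p := by exact_mod_cast hp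
    have hJt0 : (0 : ℝ) < Jt := by exact_mod_cast hJt
    have h3η0 : (0 : ℝ) < 3 / η := by positivity
    have hS0 : 0 < S := by
      rw [hS]
      refine Finset.sum_pos' (fun r _ => by positivity) ⟨1, Finset.mem_Icc.2 ⟨le_refl 1, hrbar⟩, ?_⟩
      have : (p.choose 1 : ℝ) = p := by rw [Nat.choose_one_right]
      rw [this]
      positivity
    have hterm : ∀ r ∈ Finset.Icc 1 rbar,
        (p.choose r : ℝ) * (Jt : ℝ) ^ (r + 1) * (3 / η) ^ (Jt ^ (r + 1)) ≤ Tm := by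
      intro r hr
      rw [Finset.mem_Icc] at hr
      have h1 : (p.choose r : ℝ) ≤ (p : ℝ) ^ rbar := by
        calc (p.choose r : ℝ) ≤ (p : ℝ) ^ r := by exact_mod_cast Nat.choose_le_pow p r
          _ ≤ (p : ℝ) ^ rbar := pow_le_pow_right₀ (by exact_mod_cast hp) hr.2
      have h2 : (Jt : ℝ) ^ (r + 1) ≤ (Jt : ℝ) ^ (rbar + 1) :=
        pow_le_pow_right₀ (by exact_mod_cast hJt) (by omega)
      have h3 : (3 / η) ^ (Jt ^ (r + 1)) ≤ (3 / η) ^ (Jt ^ (rbar + 1)) :=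
        pow_le_pow_right₀ h3η (Nat.pow_le_pow_right hJt (by omega))
      rw [hTm]
      calc (p.choose r : ℝ) * (Jt : ℝ) ^ (r + 1) * (3 / η) ^ (Jt ^ (r + 1))
          ≤ (p : ℝ) ^ rbar * (Jt : ℝ) ^ (rbar + 1) * (3 / η) ^ (Jt ^ (rbar + 1)) := by
            refine mul_le_mul (mul_le_mul h1 h2 (by positivity) (by positivity)) h3
              (by positivity) (by positivity)
        _ = (p : ℝ) ^ rbar * ((Jt : ℝ) ^ (rbar + 1) * (3 / η) ^ (Jt ^ (rbar + 1))) := by ring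
    have hSle : S ≤ (rbar : ℝ) * Tm := by
      rw [hS]
      calc ∑ r ∈ Finset.Icc 1 rbar,
            (p.choose r : ℝ) * (Jt : ℝ) ^ (r + 1) * (3 / η) ^ (Jt ^ (r + 1))
          ≤ ∑ _r ∈ Finset.Icc 1 rbar, Tm := Finset.sum_le_sum hterm
        _ = (rbar : ℝ) * Tm := by
            rw [Finset.sum_const, nsmul_eq_mul, Nat.card_Icc]
            norm_num
    have hrbar0 : (0 : ℝ) < rbar := by exact_mod_cast hrbar
    have hTm0 : 0 < Tm := by rw [hTm]; positivity
    calc Real.log S ≤ Real.log ((rbar : ℝ) * Tm) :=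
          Real.log_le_log hS0 hSle
      _ = Real.log rbar + (rbar * Real.log p + ((rbar + 1) * Real.log Jt +
            (Jt : ℝ) ^ (rbar + 1) * Real.log (3 / η))) := by
          rw [hTm, Real.log_mul (ne_of_gt hrbar0) (ne_of_gt (by positivity)),
            Real.log_mul (ne_of_gt (by positivity)) (ne_of_gt (by positivity)),
            Real.log_mul (ne_of_gt (by positivity)) (ne_of_gt (by positivity)),
            Real.log_pow, Real.log_pow, Real.log_pow]
          push_cast
          ring
      _ = Real.log rbar + rbar * Real.log p + (rbar + 1) * Real.log Jt +
            (Jt : ℝ) ^ (rbar + 1) * Real.log (3 / η) := by ring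
end
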